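/- Let ε > 0, ρ ∈ (0,1], γ ≥ 0, and nonzero unit vectors ū₁,...,ū_N ∈ ℝⁿ. Define for symmetric PD Σ: F(Σ) = (1+γ/n)⁻¹ ( (n/N) Σ_k ū_k ū_kᵀ / (ū_kᵀ Σ⁻¹ ū_k + ε) + γI ), F̃(Σ) = (1−ρ)F(Σ) + ρI, and T(Σ) = n F̃(Σ)/tr(F̃(Σ)). Then T maps the set S = {Σ PSD : tr Σ = n, Σ ⪰ (ρ'/C) I for suitable bounds} into itself and has a fixed point Σ* ≻ 0 with tr Σ* = n (by Brouwer's fixed point theorem on a compact convex set). -/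

import Mathlib

open Matrix

noncomputable def Fmap (n N : ℕ) (eps γ : ℝ) (u : Fin N → Fin n → ℝ)
    (S : Matrix (Fin n) (Fin n) ℝ) : Matrix (Fin n) (Fin n) ℝ :=
  (1 + γ / (n : ℝ))⁻¹ •
    (((n : ℝ) / N) • ∑ k, ((u k ⬝ᵥ (S⁻¹ *ᵥ u k)) + eps)⁻¹ •
        Matrix.vecMulVec (u k) (u k)
      + γ • (1 : Matrix (Fin n) (Fin n) ℝ))

noncomputable def Ftil (n N : ℕ) (eps ρ γ : ℝ) (u : Fin N → Fin n → ℝ)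
    (S : Matrix (Fin n) (Fin n) ℝ) : Matrix (Fin n) (Fin n) ℝ :=
  (1 - ρ) • Fmap n N eps γ u S + ρ • (1 : Matrix (Fin n) (Fin n) ℝ)

noncomputable def Tmap (n N : ℕ) (eps ρ γ : ℝ) (u : Fin N → Fin n → ℝ)
    (S : Matrix (Fin n) (Fin n) ℝ) : Matrix (Fin n) (Fin n) ℝ :=
  ((Ftil n N eps ρ γ u S).trace)⁻¹ • ((n : ℝ) • Ftil n N eps ρ γ u S)


namespace Stmt13
variable {n N : ℕ}



variable {n N : ℕ}

lemma vecMulVec_mulVec' (v x : Fin n → ℝ) :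
    (vecMulVec v v) *ᵥ x = (v ⬝ᵥ x) • v := by
  funext i
  simp only [Matrix.mulVec, Matrix.vecMulVec_apply, dotProduct, Pi.smul_apply,
    smul_eq_mul, Finset.sum_mul, Finset.mul_sum]
  exact Finset.sum_congr rfl fun j _ => by ring

lemma dot_mulVec_symm {A : Matrix (Fin n) (Fin n) ℝ} (hA : A.IsHermitian)
    (v x : Fin n → ℝ) : v ⬝ᵥ (A *ᵥ x) = x ⬝ᵥ (A *ᵥ v) := by
  simp only [Matrix.mulVec, dotProduct, Finset.mul_sum]
  rw [Finset.sum_comm]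
  refine Finset.sum_congr rfl fun j _ => Finset.sum_congr rfl fun i _ => ?_
  have h : A j i = A i j := by
    have := congr_fun (congr_fun hA.symm j) i
    simpa [Matrix.conjTranspose_apply] using this
  rw [h]; ring

lemma mulVec_inv_self {A : Matrix (Fin n) (Fin n) ℝ} (hA : A.PosDef) (w : Fin n → ℝ) :
    A *ᵥ (A⁻¹ *ᵥ w) = w := by
  rw [Matrix.mulVec_mulVec, Matrix.mul_nonsing_inv _ hA.det_pos.ne'.isUnit, Matrix.one_mulVec]

lemma key_ineq {A : Matrix (Fin n) (Fin n) ℝ} (hA : A.PosDef) (w x : Fin n → ℝ) :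
    2 * (x ⬝ᵥ w) - x ⬝ᵥ (A *ᵥ x) ≤ w ⬝ᵥ (A⁻¹ *ᵥ w) := by
  set v := A⁻¹ *ᵥ w with hv
  have hAv : A *ᵥ v = w := mulVec_inv_self hA w
  have h0 : 0 ≤ (x - v) ⬝ᵥ (A *ᵥ (x - v)) := by
    have := (posSemidef_iff_dotProduct_mulVec.mp hA.posSemidef).2 (x - v)
    simpa using this
  have hexp : (x - v) ⬝ᵥ (A *ᵥ (x - v))
      = x ⬝ᵥ (A *ᵥ x) - x ⬝ᵥ (A *ᵥ v) - v ⬝ᵥ (A *ᵥ x) + v ⬝ᵥ (A *ᵥ v) := by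
    rw [Matrix.mulVec_sub]
    simp only [sub_dotProduct, dotProduct_sub]
    ring
  have h1 : x ⬝ᵥ (A *ᵥ v) = x ⬝ᵥ w := by rw [hAv]
  have h2 : v ⬝ᵥ (A *ᵥ x) = x ⬝ᵥ w := by rw [dot_mulVec_symm hA.isHermitian, hAv]
  have h3 : v ⬝ᵥ (A *ᵥ v) = w ⬝ᵥ (A⁻¹ *ᵥ w) := by
    rw [hAv, dotProduct_comm, hv]
  rw [hexp, h1, h2, h3] at h0
  linarith

lemma inv_form_mono {A B : Matrix (Fin n) (Fin n) ℝ} (hA : A.PosDef) (hB : B.PosDef)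
    (h : ∀ x, x ⬝ᵥ (A *ᵥ x) ≤ x ⬝ᵥ (B *ᵥ x)) (w : Fin n → ℝ) :
    w ⬝ᵥ (B⁻¹ *ᵥ w) ≤ w ⬝ᵥ (A⁻¹ *ᵥ w) := by
  set v := B⁻¹ *ᵥ w with hv
  have hBv : B *ᵥ v = w := mulVec_inv_self hB w
  have h1 : w ⬝ᵥ (B⁻¹ *ᵥ w) = 2 * (v ⬝ᵥ w) - v ⬝ᵥ (B *ᵥ v) := by
    rw [hBv, ← hv, dotProduct_comm w v]; ring
  calc w ⬝ᵥ (B⁻¹ *ᵥ w) = 2 * (v ⬝ᵥ w) - v ⬝ᵥ (B *ᵥ v) := h1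
    _ ≤ 2 * (v ⬝ᵥ w) - v ⬝ᵥ (A *ᵥ v) := by linarith [h v]
    _ ≤ w ⬝ᵥ (A⁻¹ *ᵥ w) := key_ineq hA w v





variable {n N : ℕ}

lemma dotProduct_sum' (x : Fin n → ℝ) (g : Fin N → Fin n → ℝ) :
    x ⬝ᵥ (∑ k, g k) = ∑ k, x ⬝ᵥ g k := by
  simp only [dotProduct, Finset.sum_apply, Finset.mul_sum]
  exact Finset.sum_comm

lemma sum_mulVec' (f : Fin N → Matrix (Fin n) (Fin n) ℝ) (x : Fin n → ℝ) :
    (∑ k, f k) *ᵥ x = ∑ k, f k *ᵥ x := by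
  funext i
  simp only [Matrix.mulVec, dotProduct, Finset.sum_apply, Matrix.sum_apply,
    Finset.sum_mul]
  exact Finset.sum_comm

noncomputable def Gm (c₁ c₂ : ℝ) (u : Fin N → Fin n → ℝ) (t : Fin N → ℝ) :
    Matrix (Fin n) (Fin n) ℝ :=
  c₁ • ∑ k, t k • vecMulVec (u k) (u k) + c₂ • (1 : Matrix (Fin n) (Fin n) ℝ)

lemma Gm_form (c₁ c₂ : ℝ) (u : Fin N → Fin n → ℝ) (t : Fin N → ℝ) (x : Fin n → ℝ) :
    x ⬝ᵥ (Gm c₁ c₂ u t *ᵥ x) = c₁ * ∑ k, t k * (u k ⬝ᵥ x) ^ 2 + c₂ * (x ⬝ᵥ x) := by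
  rw [Gm, Matrix.add_mulVec, dotProduct_add, Matrix.smul_mulVec,
    Matrix.smul_mulVec, Matrix.one_mulVec, dotProduct_smul,
    dotProduct_smul]
  congr 1
  rw [smul_eq_mul]
  congr 1
  rw [sum_mulVec', dotProduct_sum']
  refine Finset.sum_congr rfl fun k _ => ?_
  rw [Matrix.smul_mulVec, dotProduct_smul, vecMulVec_mulVec',
    dotProduct_smul, smul_eq_mul, smul_eq_mul, dotProduct_comm x (u k)]
  ring

lemma Gm_isHermitian (c₁ c₂ : ℝ) (u : Fin N → Fin n → ℝ) (t : Fin N → ℝ) :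
    (Gm c₁ c₂ u t).IsHermitian := by
  unfold Matrix.IsHermitian
  rw [Gm]
  rw [Matrix.conjTranspose_add, Matrix.conjTranspose_smul, Matrix.conjTranspose_smul,
    Matrix.conjTranspose_one]
  congr 2
  · rw [Matrix.conjTranspose_sum]
    refine Finset.sum_congr rfl fun k _ => ?_
    rw [Matrix.conjTranspose_smul]
    congr 1
    ext i j
    simp [Matrix.conjTranspose_apply, Matrix.vecMulVec_apply, mul_comm]

lemma dotProduct_self_pos {x : Fin n → ℝ} (hx : x ≠ 0) : 0 < x ⬝ᵥ x := by
  have := Matrix.dotProduct_star_self_pos_iff (v := x) |>.mpr hx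
  simpa using this

lemma Gm_posDef {c₁ c₂ : ℝ} (hc₁ : 0 ≤ c₁) (hc₂ : 0 < c₂) (u : Fin N → Fin n → ℝ)
    {t : Fin N → ℝ} (ht : ∀ k, 0 ≤ t k) : (Gm c₁ c₂ u t).PosDef := by
  refine posDef_iff_dotProduct_mulVec.mpr ⟨Gm_isHermitian c₁ c₂ u t, fun x hx => ?_⟩
  have hform := Gm_form c₁ c₂ u t x
  have h1 : 0 ≤ c₁ * ∑ k, t k * (u k ⬝ᵥ x) ^ 2 := by
    refine mul_nonneg hc₁ (Finset.sum_nonneg fun k _ => ?_)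
    exact mul_nonneg (ht k) (sq_nonneg _)
  have h2 : 0 < c₂ * (x ⬝ᵥ x) := mul_pos hc₂ (dotProduct_self_pos hx)
  have hst : star x = x := by simp
  rw [hst, hform]
  linarith

lemma Gm_trace (c₁ c₂ : ℝ) (u : Fin N → Fin n → ℝ) (t : Fin N → ℝ)
    (hunit : ∀ k, ∑ i, u k i * u k i = 1) :
    (Gm c₁ c₂ u t).trace = c₁ * ∑ k, t k + c₂ * n := by
  rw [Gm, Matrix.trace_add, Matrix.trace_smul, Matrix.trace_smul, Matrix.trace_one,
    Matrix.trace_sum]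
  simp only [Matrix.trace_smul, smul_eq_mul]
  congr 1
  · congr 1
    refine Finset.sum_congr rfl fun k _ => ?_
    have : (vecMulVec (u k) (u k)).trace = ∑ i, u k i * u k i := by
      simp [Matrix.trace, Matrix.diag, Matrix.vecMulVec_apply]
    rw [this, hunit k, mul_one]
  · simp





variable {n N : ℕ}

lemma smul_inv' {A : Matrix (Fin n) (Fin n) ℝ} (hA : A.PosDef) {c : ℝ} (hc : c ≠ 0) :
    (c • A)⁻¹ = c⁻¹ • A⁻¹ := by
  refine Matrix.inv_eq_right_inv ?_
  rw [Matrix.smul_mul, Matrix.mul_smul, smul_smul, mul_inv_cancel₀ hc, one_smul,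
    Matrix.mul_nonsing_inv _ hA.det_pos.ne'.isUnit]

lemma posDef_smul' {A : Matrix (Fin n) (Fin n) ℝ} (hA : A.PosDef) {c : ℝ} (hc : 0 < c) :
    (c • A).PosDef := by
  refine posDef_iff_dotProduct_mulVec.mpr ⟨?_, fun x hx => ?_⟩
  · unfold Matrix.IsHermitian
    rw [Matrix.conjTranspose_smul, hA.isHermitian]
    congr 1
  · rw [Matrix.smul_mulVec, dotProduct_smul, smul_eq_mul]
    exact mul_pos hc ((posDef_iff_dotProduct_mulVec.mp hA).2 hx)

lemma trace_pos_of_posDef {A : Matrix (Fin n) (Fin n) ℝ} (hn : 0 < n) (hA : A.PosDef) :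
    0 < A.trace := by
  have hdiag : ∀ i, 0 < A i i := by
    intro i
    have hne : (Pi.single i (1:ℝ) : Fin n → ℝ) ≠ 0 := by
      intro h
      have := congr_fun h i
      simp at this
    have := (posDef_iff_dotProduct_mulVec.mp hA).2 hne
    simpa [dotProduct, Matrix.mulVec, Pi.single_apply, Finset.mul_sum] using this
  rw [Matrix.trace]
  refine Finset.sum_pos (fun i _ => hdiag i) ?_
  simpa [Finset.univ_nonempty_iff] using Fin.pos_iff_nonempty.mp hn

lemma abs_log_sub_log_le {A B m : ℝ} (hm : 0 < m) (hA : m ≤ A) (hB : m ≤ B) :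
    |Real.log A - Real.log B| ≤ |A - B| / m := by
  have hA0 : 0 < A := lt_of_lt_of_le hm hA
  have hB0 : 0 < B := lt_of_lt_of_le hm hB
  have key : ∀ X Y : ℝ, m ≤ X → m ≤ Y → Real.log X - Real.log Y ≤ |X - Y| / m := by
    intro X Y hX hY
    have hX0 : 0 < X := lt_of_lt_of_le hm hX
    have hY0 : 0 < Y := lt_of_lt_of_le hm hY
    have h1 : Real.log X - Real.log Y = Real.log (X / Y) := (Real.log_div hX0.ne' hY0.ne').symm
    have h2 : Real.log (X / Y) ≤ X / Y - 1 := Real.log_le_sub_one_of_pos (by positivity)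
    have h3 : X / Y - 1 = (X - Y) / Y := by field_simp
    have h4 : (X - Y) / Y ≤ |X - Y| / m := by
      rcases le_total X Y with h | h
      · have : (X - Y) / Y ≤ 0 := div_nonpos_of_nonpos_of_nonneg (by linarith) hY0.le
        have : (0:ℝ) ≤ |X - Y| / m := by positivity
        linarith [div_nonpos_of_nonpos_of_nonneg (show X - Y ≤ 0 by linarith) hY0.le]
      · have habs : |X - Y| = X - Y := abs_of_nonneg (by linarith)
        rw [habs]
        exact div_le_div_of_nonneg_left (by linarith) hm hY |>.trans_eq rfl |>.trans le_rfl
          |> fun h' => h'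
    linarith
  rw [abs_sub_le_iff]
  exact ⟨key A B hA hB, by simpa [abs_sub_comm] using key B A hB hA⟩

lemma log_contract {θ D δ : ℝ} (hθ0 : 0 ≤ θ) (hθ1 : θ < 1) (hD : 0 ≤ D) (hδ0 : 0 ≤ δ)
    (hδD : δ ≤ D) :
    1 + θ * (Real.exp δ - 1) ≤ Real.exp ((1 - (1 - θ) * Real.exp (-D)) * δ) := by
  set E := Real.exp δ with hE
  set F := Real.exp (-δ) with hF
  have hEpos : 0 < E := Real.exp_pos _
  have hFpos : 0 < F := Real.exp_pos _
  have hEF : E * F = 1 := by rw [hE, hF, ← Real.exp_add]; simp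
  have h1δ : 1 + δ ≤ E := Real.add_one_le_exp δ |>.trans_eq rfl |> fun h => by
    simpa [add_comm] using h
  -- δ * F ≤ 1 - F
  have hdF : δ * F ≤ 1 - F := by nlinarith
  -- F ≥ exp (-D) is wrong; rather exp(-δ) ≥ exp(-D)
  have hFD : Real.exp (-D) ≤ F := Real.exp_le_exp.mpr (by linarith)
  have hstep1 : 1 + θ * (E - 1) ≤ E * (1 - (1 - θ) * Real.exp (-D) * δ) := by
    have expand : 1 + θ * (E - 1) = E * (1 - (1 - θ) * (1 - F)) := by
      have : E * F = 1 := hEF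
      nlinarith [hEF]
    rw [expand]
    have h2 : (1 - θ) * Real.exp (-D) * δ ≤ (1 - θ) * (1 - F) := by
      have : Real.exp (-D) * δ ≤ F * δ := by nlinarith
      nlinarith
    nlinarith
  have hstep2 : E * (1 - (1 - θ) * Real.exp (-D) * δ) ≤
      Real.exp ((1 - (1 - θ) * Real.exp (-D)) * δ) := by
    have h3 : (1 : ℝ) - (1 - θ) * Real.exp (-D) * δ ≤ Real.exp (-((1 - θ) * Real.exp (-D) * δ)) := by
      have := Real.add_one_le_exp (-((1 - θ) * Real.exp (-D) * δ))
      linarith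
    have h4 : E * Real.exp (-((1 - θ) * Real.exp (-D) * δ)) =
        Real.exp ((1 - (1 - θ) * Real.exp (-D)) * δ) := by
      rw [hE, ← Real.exp_add]
      ring_nf
    calc E * (1 - (1 - θ) * Real.exp (-D) * δ)
        ≤ E * Real.exp (-((1 - θ) * Real.exp (-D) * δ)) := by nlinarith
      _ = _ := h4
  linarith



noncomputable def qq (c₁ c₂ : ℝ) (u : Fin N → Fin n → ℝ) (t : Fin N → ℝ) (k : Fin N) : ℝ :=
  u k ⬝ᵥ ((Gm c₁ c₂ u t)⁻¹ *ᵥ u k)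

section qqLemmas

variable {c₁ c₂ : ℝ} (hc₁ : 0 ≤ c₁) (hc₂ : 0 < c₂) (u : Fin N → Fin n → ℝ)
  (hunit : ∀ k, ∑ i, u k i * u k i = 1)

include hc₁ hc₂

lemma qq_nonneg {t : Fin N → ℝ} (ht : ∀ k, 0 ≤ t k) (k : Fin N) :
    0 ≤ qq c₁ c₂ u t k := by
  have hpd := (Gm_posDef hc₁ hc₂ u ht).inv
  have := (posSemidef_iff_dotProduct_mulVec.mp hpd.posSemidef).2 (u k)
  simpa [qq] using this

omit hc₁ in
lemma smul_one_posDef : ((c₂ : ℝ) • (1 : Matrix (Fin n) (Fin n) ℝ)).PosDef :=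
  posDef_smul' Matrix.PosDef.one hc₂

include hunit in
lemma qq_le {t : Fin N → ℝ} (ht : ∀ k, 0 ≤ t k) (k : Fin N) :
    qq c₁ c₂ u t k ≤ c₂⁻¹ := by
  have hG := Gm_posDef hc₁ hc₂ u ht
  have hI := smul_one_posDef (n := n) hc₂
  have hforms : ∀ x, x ⬝ᵥ ((c₂ • (1 : Matrix (Fin n) (Fin n) ℝ)) *ᵥ x)
      ≤ x ⬝ᵥ (Gm c₁ c₂ u t *ᵥ x) := by
    intro x
    rw [Gm_form, Matrix.smul_mulVec, Matrix.one_mulVec, dotProduct_smul,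
      smul_eq_mul]
    have : 0 ≤ c₁ * ∑ j, t j * (u j ⬝ᵥ x) ^ 2 :=
      mul_nonneg hc₁ (Finset.sum_nonneg fun j _ => mul_nonneg (ht j) (sq_nonneg _))
    linarith
  have hmono := inv_form_mono hI hG hforms (u k)
  have hinv : ((c₂ : ℝ) • (1 : Matrix (Fin n) (Fin n) ℝ))⁻¹ = c₂⁻¹ • 1 := by
    rw [smul_inv' Matrix.PosDef.one hc₂.ne', inv_one]
  rw [hinv] at hmono
  have : u k ⬝ᵥ ((c₂⁻¹ • (1 : Matrix (Fin n) (Fin n) ℝ)) *ᵥ u k) = c₂⁻¹ := by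
    rw [Matrix.smul_mulVec, Matrix.one_mulVec, dotProduct_smul, smul_eq_mul]
    have : u k ⬝ᵥ u k = 1 := by
      rw [dotProduct]
      exact hunit k
    rw [this, mul_one]
  rw [this] at hmono
  exact le_trans (le_of_eq rfl) (by simpa [qq] using hmono)

lemma qq_ratio {t t' : Fin N → ℝ} (ht : ∀ k, 0 ≤ t k) (ht' : ∀ k, 0 ≤ t' k)
    {r : ℝ} (hr : 1 ≤ r) (h : ∀ k, t k ≤ r * t' k) (j : Fin N) :
    qq c₁ c₂ u t' j ≤ r * qq c₁ c₂ u t j := by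
  have hr0 : 0 < r := lt_of_lt_of_le one_pos hr
  have hGt := Gm_posDef hc₁ hc₂ u ht
  have hGt' := Gm_posDef hc₁ hc₂ u ht'
  have hB : ((r : ℝ) • Gm c₁ c₂ u t').PosDef := posDef_smul' hGt' hr0
  have hforms : ∀ x, x ⬝ᵥ (Gm c₁ c₂ u t *ᵥ x) ≤ x ⬝ᵥ ((r • Gm c₁ c₂ u t') *ᵥ x) := by
    intro x
    rw [Matrix.smul_mulVec, dotProduct_smul, smul_eq_mul, Gm_form, Gm_form]
    have hterm : ∀ k, t k * (u k ⬝ᵥ x) ^ 2 ≤ (r * t' k) * (u k ⬝ᵥ x) ^ 2 := fun k =>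
      mul_le_mul_of_nonneg_right (h k) (sq_nonneg _)
    have hsum : ∑ k, t k * (u k ⬝ᵥ x) ^ 2 ≤ r * ∑ k, t' k * (u k ⬝ᵥ x) ^ 2 := by
      rw [Finset.mul_sum]
      refine Finset.sum_le_sum fun k _ => (hterm k).trans_eq (by ring)
    have hxx : 0 ≤ x ⬝ᵥ x := by
      rw [dotProduct]; exact Finset.sum_nonneg fun i _ => mul_self_nonneg _
    have h1 : c₁ * ∑ k, t k * (u k ⬝ᵥ x) ^ 2 ≤ r * (c₁ * ∑ k, t' k * (u k ⬝ᵥ x) ^ 2) := by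
      nlinarith
    have h2 : c₂ * (x ⬝ᵥ x) ≤ r * (c₂ * (x ⬝ᵥ x)) := by nlinarith [mul_nonneg hc₂.le hxx]
    linarith
  have hmono := inv_form_mono hGt hB hforms (u j)
  have hinv : ((r : ℝ) • Gm c₁ c₂ u t')⁻¹ = r⁻¹ • (Gm c₁ c₂ u t')⁻¹ :=
    smul_inv' hGt' hr0.ne'
  rw [hinv, Matrix.smul_mulVec, dotProduct_smul, smul_eq_mul] at hmono
  have : qq c₁ c₂ u t' j ≤ r * qq c₁ c₂ u t j := by
    have hq : r⁻¹ * qq c₁ c₂ u t' j ≤ qq c₁ c₂ u t j := by simpa [qq] using hmono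
    calc qq c₁ c₂ u t' j = r * (r⁻¹ * qq c₁ c₂ u t' j) := by field_simp
      _ ≤ r * qq c₁ c₂ u t j := by nlinarith
  exact this

end qqLemmas


noncomputable def Qc (c₂ lamx : ℝ) : ℝ := lamx / c₂
noncomputable def lbb (eps : ℝ) : ℝ := -Real.log eps
noncomputable def laa (c₂ eps lamx : ℝ) : ℝ := -Real.log (Qc c₂ lamx + eps)
noncomputable def DD (c₂ eps lamx : ℝ) : ℝ := lbb eps - laa c₂ eps lamx
noncomputable def thet (c₂ eps lamx : ℝ) : ℝ := Qc c₂ lamx / (Qc c₂ lamx + eps)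
noncomputable def kap (c₂ eps lamx : ℝ) : ℝ :=
  1 - (1 - thet c₂ eps lamx) * Real.exp (-(DD c₂ eps lamx))

section facts
variable {c₂ eps lamx : ℝ} (hc₂ : 0 < c₂) (heps : 0 < eps) (hlamx : 0 ≤ lamx)
include hc₂ heps hlamx

lemma Qc_nonneg : 0 ≤ Qc c₂ lamx := div_nonneg hlamx hc₂.le
lemma thet_nonneg : 0 ≤ thet c₂ eps lamx := by
  have hQ := Qc_nonneg hc₂ heps hlamx
  exact div_nonneg hQ (by linarith)
lemma thet_lt_one : thet c₂ eps lamx < 1 := by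
  have hQ := Qc_nonneg hc₂ heps hlamx
  rw [thet, div_lt_one (by linarith)]
  linarith
lemma DD_nonneg : 0 ≤ DD c₂ eps lamx := by
  have hQ := Qc_nonneg hc₂ heps hlamx
  have : Real.log eps ≤ Real.log (Qc c₂ lamx + eps) :=
    Real.log_le_log heps (by linarith)
  simp only [DD, lbb, laa]
  linarith
lemma laa_le_lbb : laa c₂ eps lamx ≤ lbb eps := by
  have := DD_nonneg hc₂ heps hlamx
  simp only [DD] at this; linarith
lemma kap_nonneg : 0 ≤ kap c₂ eps lamx := by
  have h1 : (1 - thet c₂ eps lamx) ≤ 1 := by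
    have := thet_nonneg hc₂ heps hlamx; linarith
  have h2 : Real.exp (-(DD c₂ eps lamx)) ≤ 1 := by
    rw [Real.exp_le_one_iff]
    have := DD_nonneg hc₂ heps hlamx; linarith
  have h3 : 0 ≤ 1 - thet c₂ eps lamx := by
    have := thet_lt_one hc₂ heps hlamx; linarith
  have := mul_le_one₀ h1 (Real.exp_pos _).le h2
  simp only [kap]; nlinarith
lemma kap_lt_one : kap c₂ eps lamx < 1 := by
  have h3 : 0 < 1 - thet c₂ eps lamx := by
    have := thet_lt_one hc₂ heps hlamx; linarith
  have := mul_pos h3 (Real.exp_pos (-(DD c₂ eps lamx)))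
  simp only [kap]; linarith
end facts

noncomputable def clampB (la lb : ℝ) (x : Fin N → ℝ) (j : Fin N) : ℝ := max la (min (x j) lb)

noncomputable def PsiMap (c₁ c₂ eps lamx : ℝ) (u : Fin N → Fin n → ℝ) (lam : ℝ)
    (x : Fin N → ℝ) : Fin N → ℝ :=
  fun k => -Real.log
    (lam * qq c₁ c₂ u (fun j => Real.exp (clampB (laa c₂ eps lamx) (lbb eps) x j)) k + eps)

lemma clampB_lip (la lb : ℝ) (x y : Fin N → ℝ) (j : Fin N) :
    |clampB la lb x j - clampB la lb y j| ≤ |x j - y j| := by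
  unfold clampB
  rw [max_comm la _, max_comm la _]
  refine (abs_max_sub_max_le_abs _ _ _).trans ?_
  refine le_trans (le_of_eq rfl) ?_
  have := abs_min_sub_min_le_max (x j) lb (y j) lb
  simpa using this

lemma clampB_mem {la lb : ℝ} (h : la ≤ lb) (x : Fin N → ℝ) (j : Fin N) :
    la ≤ clampB la lb x j ∧ clampB la lb x j ≤ lb := by
  unfold clampB
  exact ⟨le_max_left _ _, max_le h (min_le_right _ _)⟩

lemma clampB_eq_self {la lb : ℝ} {x : Fin N → ℝ} (h : ∀ j, la ≤ x j ∧ x j ≤ lb) :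
    clampB la lb x = x := by
  funext j
  unfold clampB
  rw [min_eq_left (h j).2, max_eq_right (h j).1]

lemma ratio_step {Q eps X Y r : ℝ} (heps : 0 < eps) (hQ : 0 ≤ Q) (hY : 0 ≤ Y)
    (hXY : X ≤ r * Y) (hYQ : Y ≤ Q) (hr : 1 ≤ r) :
    X + eps ≤ (1 + Q / (Q + eps) * (r - 1)) * (Y + eps) := by
  have hQe : 0 < Q + eps := by linarith
  have hθY : Y ≤ Q / (Q + eps) * (Y + eps) := by
    rw [div_mul_eq_mul_div, le_div_iff₀ hQe]
    nlinarith
  nlinarith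

section PsiLemmas

variable {c₁ c₂ eps lamx lam : ℝ} {u : Fin N → Fin n → ℝ}
  (hc₁ : 0 ≤ c₁) (hc₂ : 0 < c₂) (heps : 0 < eps) (hlamx : 0 ≤ lamx)
  (hunit : ∀ k, ∑ i, u k i * u k i = 1) (hlam0 : 0 ≤ lam) (hlam1 : lam ≤ lamx)

include hc₁ hc₂ heps hlamx hunit hlam0 hlam1 in
lemma Psi_lip (x y : Fin N → ℝ) :
    dist (PsiMap c₁ c₂ eps lamx u lam x) (PsiMap c₁ c₂ eps lamx u lam y)
      ≤ kap c₂ eps lamx * dist x y := by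
  have hθ0 := thet_nonneg hc₂ heps hlamx
  have hθ1 := thet_lt_one hc₂ heps hlamx
  have hD0 := DD_nonneg hc₂ heps hlamx
  have hκ0 := kap_nonneg hc₂ heps hlamx
  have hlab := laa_le_lbb hc₂ heps hlamx
  set la := laa c₂ eps lamx with hla
  set lb := lbb eps with hlb
  set cx := clampB la lb x with hcx
  set cy := clampB la lb y with hcy
  set t : Fin N → ℝ := fun j => Real.exp (cx j) with htdef
  set t' : Fin N → ℝ := fun j => Real.exp (cy j) with ht'def
  have ht : ∀ j, 0 ≤ t j := fun j => (Real.exp_pos _).le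
  have ht' : ∀ j, 0 ≤ t' j := fun j => (Real.exp_pos _).le
  set δ := min (dist x y) (DD c₂ eps lamx) with hδdef
  have hδ0 : 0 ≤ δ := le_min dist_nonneg hD0
  have hδD : δ ≤ DD c₂ eps lamx := min_le_right _ _
  have hcoord : ∀ j, |cx j - cy j| ≤ δ := by
    intro j
    refine le_min ?_ ?_
    · refine (clampB_lip la lb x y j).trans ?_
      rw [← Real.dist_eq]
      exact dist_le_pi_dist x y j
    · have h1 := clampB_mem hlab x j
      have h2 := clampB_mem hlab y j
      rw [abs_sub_le_iff]
      have hDeq : DD c₂ eps lamx = lb - la := rfl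
      rw [hDeq]
      exact ⟨by linarith [h1.2, h2.1], by linarith [h2.2, h1.1]⟩
  set r := Real.exp δ with hrdef
  have hr1 : 1 ≤ r := Real.one_le_exp hδ0
  have hratio1 : ∀ j, t j ≤ r * t' j := by
    intro j
    have h := (abs_le.mp (hcoord j)).2
    calc t j = Real.exp (cx j) := rfl
      _ ≤ Real.exp (δ + cy j) := Real.exp_le_exp.mpr (by linarith)
      _ = r * t' j := by rw [Real.exp_add]
  have hratio2 : ∀ j, t' j ≤ r * t j := by
    intro j
    have h := (abs_le.mp (hcoord j)).1
    calc t' j = Real.exp (cy j) := rfl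
      _ ≤ Real.exp (δ + cx j) := Real.exp_le_exp.mpr (by linarith)
      _ = r * t j := by rw [Real.exp_add]
  have hcontr := log_contract hθ0 hθ1 hD0 hδ0 hδD
  have hcoordPsi : ∀ k, dist (PsiMap c₁ c₂ eps lamx u lam x k)
      (PsiMap c₁ c₂ eps lamx u lam y k) ≤ kap c₂ eps lamx * δ := by
    intro k
    have hq1 : qq c₁ c₂ u t' k ≤ r * qq c₁ c₂ u t k :=
      qq_ratio hc₁ hc₂ u ht ht' hr1 hratio1 k
    have hq2 : qq c₁ c₂ u t k ≤ r * qq c₁ c₂ u t' k :=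
      qq_ratio hc₁ hc₂ u ht' ht hr1 hratio2 k
    have hqle : qq c₁ c₂ u t k ≤ c₂⁻¹ := qq_le hc₁ hc₂ u hunit ht k
    have hqle' : qq c₁ c₂ u t' k ≤ c₂⁻¹ := qq_le hc₁ hc₂ u hunit ht' k
    have hq0 : 0 ≤ qq c₁ c₂ u t k := qq_nonneg hc₁ hc₂ u ht k
    have hq0' : 0 ≤ qq c₁ c₂ u t' k := qq_nonneg hc₁ hc₂ u ht' k
    set A := lam * qq c₁ c₂ u t k + eps with hAdef
    set B := lam * qq c₁ c₂ u t' k + eps with hBdef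
    have hQ := Qc_nonneg hc₂ heps hlamx
    have hYQ : lam * qq c₁ c₂ u t' k ≤ Qc c₂ lamx := by
      have : lam * qq c₁ c₂ u t' k ≤ lamx * c₂⁻¹ :=
        mul_le_mul hlam1 hqle' (by linarith) hlamx
      calc lam * qq c₁ c₂ u t' k ≤ lamx * c₂⁻¹ := this
        _ = Qc c₂ lamx := by rw [Qc, div_eq_mul_inv]
    have hXQ : lam * qq c₁ c₂ u t k ≤ Qc c₂ lamx := by
      have : lam * qq c₁ c₂ u t k ≤ lamx * c₂⁻¹ :=
        mul_le_mul hlam1 hqle (by linarith) hlamx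
      calc lam * qq c₁ c₂ u t k ≤ lamx * c₂⁻¹ := this
        _ = Qc c₂ lamx := by rw [Qc, div_eq_mul_inv]
    have hX0 : 0 ≤ lam * qq c₁ c₂ u t k := mul_nonneg hlam0 hq0
    have hY0 : 0 ≤ lam * qq c₁ c₂ u t' k := mul_nonneg hlam0 hq0'
    have hAB : A ≤ (1 + thet c₂ eps lamx * (r - 1)) * B := by
      refine ratio_step heps hQ hY0 ?_ hYQ hr1
      calc lam * qq c₁ c₂ u t k ≤ lam * (r * qq c₁ c₂ u t' k) :=
            mul_le_mul_of_nonneg_left hq2 hlam0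
        _ = r * (lam * qq c₁ c₂ u t' k) := by ring
    have hBA : B ≤ (1 + thet c₂ eps lamx * (r - 1)) * A := by
      refine ratio_step heps hQ hX0 ?_ hXQ hr1
      calc lam * qq c₁ c₂ u t' k ≤ lam * (r * qq c₁ c₂ u t k) :=
            mul_le_mul_of_nonneg_left hq1 hlam0
        _ = r * (lam * qq c₁ c₂ u t k) := by ring
    have hA0 : 0 < A := by simp only [hAdef]; linarith
    have hB0 : 0 < B := by simp only [hBdef]; linarith
    have hexpk : 1 + thet c₂ eps lamx * (r - 1) ≤ Real.exp (kap c₂ eps lamx * δ) := by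
      have := hcontr
      simpa [kap, hrdef] using this
    have hAB' : A ≤ Real.exp (kap c₂ eps lamx * δ) * B :=
      hAB.trans (mul_le_mul_of_nonneg_right hexpk hB0.le)
    have hBA' : B ≤ Real.exp (kap c₂ eps lamx * δ) * A :=
      hBA.trans (mul_le_mul_of_nonneg_right hexpk hA0.le)
    have hlog1 : Real.log A - Real.log B ≤ kap c₂ eps lamx * δ := by
      have := Real.log_le_log hA0 hAB'
      rw [Real.log_mul (Real.exp_pos _).ne' hB0.ne', Real.log_exp] at this
      linarith
    have hlog2 : Real.log B - Real.log A ≤ kap c₂ eps lamx * δ := by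
      have := Real.log_le_log hB0 hBA'
      rw [Real.log_mul (Real.exp_pos _).ne' hA0.ne', Real.log_exp] at this
      linarith
    have habs : |Real.log A - Real.log B| ≤ kap c₂ eps lamx * δ :=
      abs_sub_le_iff.mpr ⟨hlog1, hlog2⟩
    have hPx : PsiMap c₁ c₂ eps lamx u lam x k = -Real.log A := rfl
    have hPy : PsiMap c₁ c₂ eps lamx u lam y k = -Real.log B := rfl
    rw [Real.dist_eq, hPx, hPy]
    calc |-Real.log A - -Real.log B| = |Real.log A - Real.log B| := by
          rw [← abs_neg]; ring_nf
      _ ≤ kap c₂ eps lamx * δ := habs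
  have hfin : ∀ k, dist (PsiMap c₁ c₂ eps lamx u lam x k)
      (PsiMap c₁ c₂ eps lamx u lam y k) ≤ kap c₂ eps lamx * dist x y := by
    intro k
    refine (hcoordPsi k).trans ?_
    exact mul_le_mul_of_nonneg_left (min_le_left _ _) hκ0
  exact (dist_pi_le_iff (mul_nonneg hκ0 dist_nonneg)).mpr hfin

include hc₁ hc₂ heps hlamx hunit hlam0 hlam1 in
lemma Psi_mem (x : Fin N → ℝ) (k : Fin N) :
    laa c₂ eps lamx ≤ PsiMap c₁ c₂ eps lamx u lam x k ∧
      PsiMap c₁ c₂ eps lamx u lam x k ≤ lbb eps := by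
  set t : Fin N → ℝ := fun j => Real.exp (clampB (laa c₂ eps lamx) (lbb eps) x j)
  have ht : ∀ j, 0 ≤ t j := fun j => (Real.exp_pos _).le
  have hq0 : 0 ≤ qq c₁ c₂ u t k := qq_nonneg hc₁ hc₂ u ht k
  have hqle : qq c₁ c₂ u t k ≤ c₂⁻¹ := qq_le hc₁ hc₂ u hunit ht k
  have hQb : lam * qq c₁ c₂ u t k ≤ Qc c₂ lamx := by
    have : lam * qq c₁ c₂ u t k ≤ lamx * c₂⁻¹ :=
      mul_le_mul hlam1 hqle (by linarith) hlamx
    calc lam * qq c₁ c₂ u t k ≤ lamx * c₂⁻¹ := this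
      _ = Qc c₂ lamx := by rw [Qc, div_eq_mul_inv]
  have hX0 : 0 ≤ lam * qq c₁ c₂ u t k := mul_nonneg hlam0 hq0
  constructor
  · rw [laa]
    have : lam * qq c₁ c₂ u t k + eps ≤ Qc c₂ lamx + eps := by linarith
    have hlog := Real.log_le_log (by linarith) this
    simp only [PsiMap]
    linarith
  · rw [lbb]
    have : eps ≤ lam * qq c₁ c₂ u t k + eps := by linarith
    have hlog := Real.log_le_log heps this
    simp only [PsiMap]
    linarith

include hc₁ hc₂ heps hlamx hunit hlam0 in
lemma Psi_param {lam' : ℝ} (hlam0' : 0 ≤ lam') (x : Fin N → ℝ) :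
    dist (PsiMap c₁ c₂ eps lamx u lam x) (PsiMap c₁ c₂ eps lamx u lam' x)
      ≤ c₂⁻¹ / eps * |lam - lam'| := by
  have hCpos : (0:ℝ) ≤ c₂⁻¹ / eps * |lam - lam'| := by positivity
  refine (dist_pi_le_iff hCpos).mpr fun k => ?_
  set t : Fin N → ℝ := fun j => Real.exp (clampB (laa c₂ eps lamx) (lbb eps) x j)
  have ht : ∀ j, 0 ≤ t j := fun j => (Real.exp_pos _).le
  have hq0 : 0 ≤ qq c₁ c₂ u t k := qq_nonneg hc₁ hc₂ u ht k
  have hqle : qq c₁ c₂ u t k ≤ c₂⁻¹ := qq_le hc₁ hc₂ u hunit ht k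
  set A := lam * qq c₁ c₂ u t k + eps with hAdef
  set B := lam' * qq c₁ c₂ u t k + eps with hBdef
  have hA : eps ≤ A := by
    have : 0 ≤ lam * qq c₁ c₂ u t k := mul_nonneg hlam0 hq0
    simp only [hAdef]; linarith
  have hB : eps ≤ B := by
    have : 0 ≤ lam' * qq c₁ c₂ u t k := mul_nonneg hlam0' hq0
    simp only [hBdef]; linarith
  have hlog := abs_log_sub_log_le heps hA hB
  have hABdiff : |A - B| ≤ |lam - lam'| * c₂⁻¹ := by
    have : A - B = (lam - lam') * qq c₁ c₂ u t k := by simp only [hAdef, hBdef]; ring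
    rw [this, abs_mul, abs_of_nonneg hq0]
    exact mul_le_mul_of_nonneg_left hqle (abs_nonneg _)
  have hPx : PsiMap c₁ c₂ eps lamx u lam x k = -Real.log A := rfl
  have hPy : PsiMap c₁ c₂ eps lamx u lam' x k = -Real.log B := rfl
  rw [Real.dist_eq, hPx, hPy]
  have habs : |-Real.log A - -Real.log B| = |Real.log A - Real.log B| := by
    rw [← abs_neg]; ring_nf
  rw [habs]
  refine hlog.trans ?_
  calc |A - B| / eps ≤ |lam - lam'| * c₂⁻¹ / eps := by gcongr
    _ = c₂⁻¹ / eps * |lam - lam'| := by ring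

end PsiLemmas

end Stmt13


lemma Ftil_eq_Gm (n N : ℕ) (eps ρ γ : ℝ) (u : Fin N → Fin n → ℝ)
    (S : Matrix (Fin n) (Fin n) ℝ) :
    Ftil n N eps ρ γ u S
      = Stmt13.Gm ((1 - ρ) * ((1 + γ / (n:ℝ))⁻¹ * ((n:ℝ) / N)))
          ((1 - ρ) * ((1 + γ / (n:ℝ))⁻¹ * γ) + ρ) u
          (fun k => ((u k ⬝ᵥ (S⁻¹ *ᵥ u k)) + eps)⁻¹) := by
  unfold Ftil Fmap Stmt13.Gm
  rw [smul_add, smul_smul, smul_smul, smul_add, smul_smul, smul_smul, add_smul, add_assoc]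

set_option maxHeartbeats 1000000 in
theorem stmt_13 (n N : ℕ) (hn : 0 < n) (hN : 0 < N)
    (eps ρ γ : ℝ) (heps : 0 < eps) (hρ0 : 0 < ρ) (hρ1 : ρ ≤ 1) (hγ : 0 ≤ γ)
    (u : Fin N → Fin n → ℝ) (hu : ∀ k, u k ≠ 0)
    (hunit : ∀ k, ∑ i, u k i * u k i = 1) :
    (∀ S : Matrix (Fin n) (Fin n) ℝ, S.PosDef →
        (Tmap n N eps ρ γ u S).PosDef ∧ (Tmap n N eps ρ γ u S).trace = n) ∧
      ∃ S : Matrix (Fin n) (Fin n) ℝ, S.PosDef ∧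
        Tmap n N eps ρ γ u S = S ∧ S.trace = n := by
  classical
  have hn' : (0:ℝ) < n := by exact_mod_cast hn
  have hN' : (0:ℝ) < N := by exact_mod_cast hN
  set α := (1 + γ / (n:ℝ))⁻¹ with hα
  have hαpos : 0 < α := by
    rw [hα]
    have h1 : 0 ≤ γ / (n:ℝ) := by positivity
    have : 0 < 1 + γ / (n:ℝ) := by linarith
    positivity
  set c₁ := (1 - ρ) * (α * ((n:ℝ) / N)) with hc₁def
  set c₂ := (1 - ρ) * (α * γ) + ρ with hc₂def
  have h1ρ : 0 ≤ 1 - ρ := by linarith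
  have hc₁ : 0 ≤ c₁ := by
    rw [hc₁def]
    exact mul_nonneg h1ρ (mul_nonneg hαpos.le (by positivity))
  have hc₂ : 0 < c₂ := by
    rw [hc₂def]
    exact add_pos_of_nonneg_of_pos (mul_nonneg h1ρ (mul_nonneg hαpos.le hγ)) hρ0
  have hFtil : ∀ S : Matrix (Fin n) (Fin n) ℝ,
      Ftil n N eps ρ γ u S
        = Stmt13.Gm c₁ c₂ u (fun k => ((u k ⬝ᵥ (S⁻¹ *ᵥ u k)) + eps)⁻¹) := by
    intro S
    have h := Ftil_eq_Gm (n := n) (N := N) eps ρ γ u S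
    rw [← hα, ← hc₁def, ← hc₂def] at h
    exact h
  -- Part 1
  have part1 : ∀ S : Matrix (Fin n) (Fin n) ℝ, S.PosDef →
      (Tmap n N eps ρ γ u S).PosDef ∧ (Tmap n N eps ρ γ u S).trace = n := by
    intro S hS
    have htS0 : ∀ k, 0 ≤ ((u k ⬝ᵥ (S⁻¹ *ᵥ u k)) + eps)⁻¹ := by
      intro k
      have h1 : 0 ≤ u k ⬝ᵥ (S⁻¹ *ᵥ u k) := by
        have := (posSemidef_iff_dotProduct_mulVec.mp hS.inv.posSemidef).2 (u k)
        simpa using this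
      have : 0 < u k ⬝ᵥ (S⁻¹ *ᵥ u k) + eps := by linarith
      positivity
    have hG : Ftil n N eps ρ γ u S
        = Stmt13.Gm c₁ c₂ u (fun k => ((u k ⬝ᵥ (S⁻¹ *ᵥ u k)) + eps)⁻¹) := hFtil S
    have hGpd : (Stmt13.Gm c₁ c₂ u (fun k => ((u k ⬝ᵥ (S⁻¹ *ᵥ u k)) + eps)⁻¹)).PosDef :=
      Stmt13.Gm_posDef hc₁ hc₂ u htS0
    have htrpos : 0 < (Stmt13.Gm c₁ c₂ u
        (fun k => ((u k ⬝ᵥ (S⁻¹ *ᵥ u k)) + eps)⁻¹)).trace :=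
      Stmt13.trace_pos_of_posDef hn hGpd
    constructor
    · unfold Tmap
      rw [hG, smul_smul]
      exact Stmt13.posDef_smul' hGpd (mul_pos (inv_pos.mpr htrpos) hn')
    · unfold Tmap
      rw [hG, Matrix.trace_smul, Matrix.trace_smul, smul_eq_mul, smul_eq_mul,
        inv_mul_eq_div, mul_div_assoc, div_self htrpos.ne', mul_one]
  refine ⟨part1, ?_⟩
  clear_value α c₁ c₂
  -- Part 2 : existence of a fixed point
  set lamx := (c₁ * N * eps⁻¹ + c₂ * n) / n with hlamxdef
  have hnum1 : 0 ≤ c₁ * N * eps⁻¹ := by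
    exact mul_nonneg (mul_nonneg hc₁ hN'.le) (inv_nonneg.mpr heps.le)
  have hlamx0 : 0 < lamx := by
    rw [hlamxdef]
    have h2 : 0 < c₂ * n := mul_pos hc₂ hn'
    have : 0 < c₁ * N * eps⁻¹ + c₂ * n := by linarith
    positivity
  have hc₂lamx : c₂ ≤ lamx := by
    rw [hlamxdef, le_div_iff₀ hn']
    nlinarith
  clear_value lamx
  have hκ0 := Stmt13.kap_nonneg hc₂ heps hlamx0.le
  set κ : NNReal := Real.toNNReal (Stmt13.kap c₂ eps lamx) with hκdef
  have hκcoe : (κ : ℝ) = Stmt13.kap c₂ eps lamx := Real.coe_toNNReal _ hκ0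
  have hκlt : κ < 1 := by
    rw [← NNReal.coe_lt_coe, hκcoe, NNReal.coe_one]
    exact Stmt13.kap_lt_one hc₂ heps hlamx0.le
  set clam : ℝ → ℝ := fun l => max c₂ (min l lamx) with hclamdef
  have hclam_mem : ∀ l, 0 ≤ clam l ∧ clam l ≤ lamx := by
    intro l
    constructor
    · exact le_trans hc₂.le (le_max_left _ _)
    · exact max_le hc₂lamx (min_le_right _ _)
  have hcontr : ∀ l : ℝ,
      ContractingWith κ (Stmt13.PsiMap c₁ c₂ eps lamx u (clam l)) := by
    intro l
    refine ⟨hκlt, LipschitzWith.of_dist_le_mul fun x y => ?_⟩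
    rw [hκcoe]
    exact Stmt13.Psi_lip hc₁ hc₂ heps hlamx0.le hunit (hclam_mem l).1 (hclam_mem l).2 x y
  set fixR : ℝ → (Fin N → ℝ) := fun l =>
    ContractingWith.fixedPoint (Stmt13.PsiMap c₁ c₂ eps lamx u (clam l)) (hcontr l)
    with hfixRdef
  have hfixR : ∀ l, Stmt13.PsiMap c₁ c₂ eps lamx u (clam l) (fixR l) = fixR l := by
    intro l
    exact (hcontr l).fixedPoint_isFixedPt
  have hbox : ∀ l j, Stmt13.laa c₂ eps lamx ≤ fixR l j ∧ fixR l j ≤ Stmt13.lbb eps := by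
    intro l j
    have h := Stmt13.Psi_mem hc₁ hc₂ heps hlamx0.le hunit (hclam_mem l).1 (hclam_mem l).2
      (fixR l) j
    rw [hfixR l] at h
    exact h
  -- continuity of the fixed point in the parameter
  have hone_sub : 0 < 1 - (κ : ℝ) := by
    have := hκlt
    have h1 : (κ : ℝ) < 1 := by exact_mod_cast this
    linarith
  have hfix_dist : ∀ l m : ℝ,
      dist (fixR l) (fixR m) ≤ (c₂⁻¹ / eps * |clam l - clam m|) / (1 - (κ : ℝ)) := by
    intro l m
    exact (hcontr l).dist_fixedPoint_fixedPoint_of_dist_le'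
      (Stmt13.PsiMap c₁ c₂ eps lamx u (clam m))
      ((hcontr l).fixedPoint_isFixedPt) ((hcontr m).fixedPoint_isFixedPt)
      (fun z => Stmt13.Psi_param hc₁ hc₂ heps hlamx0.le hunit
        (hclam_mem l).1 (hclam_mem m).1 z)
  have hclam_lip : ∀ l m : ℝ, |clam l - clam m| ≤ |l - m| := by
    intro l m
    simp only [hclamdef]
    rw [max_comm c₂ _, max_comm c₂ _]
    refine (abs_max_sub_max_le_abs _ _ _).trans ?_
    have := abs_min_sub_min_le_max l lamx m lamx
    simpa using this
  have hfixcont : Continuous fixR := by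
    have hC0 : 0 ≤ (c₂⁻¹ / eps) / (1 - (κ : ℝ)) := by positivity
    refine LipschitzWith.continuous
      (K := Real.toNNReal ((c₂⁻¹ / eps) / (1 - (κ : ℝ))))
      (LipschitzWith.of_dist_le_mul fun l m => ?_)
    rw [Real.coe_toNNReal _ hC0]
    calc dist (fixR l) (fixR m)
        ≤ (c₂⁻¹ / eps * |clam l - clam m|) / (1 - (κ : ℝ)) := hfix_dist l m
      _ ≤ (c₂⁻¹ / eps * |l - m|) / (1 - (κ : ℝ)) := by
          have h1 : c₂⁻¹ / eps * |clam l - clam m| ≤ c₂⁻¹ / eps * |l - m| :=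
            mul_le_mul_of_nonneg_left (hclam_lip l m) (by positivity)
          exact (div_le_div_iff_of_pos_right hone_sub).mpr h1
      _ = (c₂⁻¹ / eps) / (1 - (κ : ℝ)) * dist l m := by
          rw [Real.dist_eq]; ring
  set gfun : ℝ → ℝ := fun l => (c₁ * ∑ k, Real.exp (fixR l k) + c₂ * n) / n with hgdef
  have hgcont : Continuous gfun := by
    rw [hgdef]
    refine Continuous.div_const ?_ _
    refine Continuous.add ?_ continuous_const
    refine Continuous.mul continuous_const ?_
    refine continuous_finset_sum _ fun k _ => ?_
    exact Real.continuous_exp.comp ((continuous_apply k).comp hfixcont)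
  have hexp_b : ∀ l k, Real.exp (fixR l k) ≤ eps⁻¹ := by
    intro l k
    calc Real.exp (fixR l k) ≤ Real.exp (Stmt13.lbb eps) :=
          Real.exp_le_exp.mpr (hbox l k).2
      _ = eps⁻¹ := by rw [Stmt13.lbb, Real.exp_neg, Real.exp_log heps]
  have hg_lb : ∀ l, c₂ ≤ gfun l := by
    intro l
    simp only [hgdef]
    rw [le_div_iff₀ hn']
    have hsum0 : 0 ≤ ∑ k, Real.exp (fixR l k) :=
      Finset.sum_nonneg fun k _ => (Real.exp_pos _).le
    nlinarith [mul_nonneg hc₁ hsum0]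
  have hg_ub : ∀ l, gfun l ≤ lamx := by
    intro l
    simp only [hgdef, hlamxdef]
    have hsum : ∑ k, Real.exp (fixR l k) ≤ (N : ℝ) * eps⁻¹ := by
      calc ∑ k, Real.exp (fixR l k) ≤ ∑ _k : Fin N, eps⁻¹ :=
            Finset.sum_le_sum fun k _ => hexp_b l k
        _ = (N : ℝ) * eps⁻¹ := by
            rw [Finset.sum_const, Finset.card_univ, Fintype.card_fin, nsmul_eq_mul]
    have hnum : c₁ * ∑ k, Real.exp (fixR l k) + c₂ * n ≤ c₁ * N * eps⁻¹ + c₂ * n := by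
      have : c₁ * ∑ k, Real.exp (fixR l k) ≤ c₁ * ((N : ℝ) * eps⁻¹) :=
        mul_le_mul_of_nonneg_left hsum hc₁
      nlinarith
    exact (div_le_div_iff_of_pos_right hn').mpr hnum
  -- IVT
  have hIVT : ∃ l ∈ Set.Icc c₂ lamx, gfun l - l = 0 := by
    have hcont2 : ContinuousOn (fun l => gfun l - l) (Set.Icc c₂ lamx) :=
      (hgcont.sub continuous_id).continuousOn
    have h0mem : (0:ℝ) ∈ Set.Icc (gfun lamx - lamx) (gfun c₂ - c₂) :=
      ⟨by linarith [hg_ub lamx], by linarith [hg_lb c₂]⟩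
    have himg := intermediate_value_Icc' hc₂lamx hcont2 h0mem
    obtain ⟨l, hl, hl0⟩ := himg
    exact ⟨l, hl, hl0⟩
  obtain ⟨lstar, hlstar_mem, hlstar_eq0⟩ := hIVT
  have hlstar_eq : gfun lstar = lstar := by linarith
  have hlstar_pos : 0 < lstar := lt_of_lt_of_le hc₂ hlstar_mem.1
  have hclam_lstar : clam lstar = lstar := by
    simp only [hclamdef]
    rw [min_eq_left hlstar_mem.2, max_eq_right hlstar_mem.1]
  set xbar : Fin N → ℝ := fixR lstar with hxbar
  set tstar : Fin N → ℝ := fun k => Real.exp (xbar k) with htstardef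
  have htstar0 : ∀ k, 0 ≤ tstar k := fun k => (Real.exp_pos _).le
  have hclampid : Stmt13.clampB (Stmt13.laa c₂ eps lamx) (Stmt13.lbb eps) xbar = xbar :=
    Stmt13.clampB_eq_self (fun j => hbox lstar j)
  have hfix_eq : ∀ k, tstar k = (lstar * Stmt13.qq c₁ c₂ u tstar k + eps)⁻¹ := by
    intro k
    have heq := hfixR lstar
    rw [hclam_lstar] at heq
    have hk := congr_fun heq k
    rw [← hxbar] at hk
    have hPk : Stmt13.PsiMap c₁ c₂ eps lamx u lstar xbar k
        = -Real.log (lstar * Stmt13.qq c₁ c₂ u tstar k + eps) := by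
      simp only [Stmt13.PsiMap, hclampid, htstardef]
    rw [hPk] at hk
    have hApos : 0 < lstar * Stmt13.qq c₁ c₂ u tstar k + eps := by
      have hq0 : 0 ≤ Stmt13.qq c₁ c₂ u tstar k := Stmt13.qq_nonneg hc₁ hc₂ u htstar0 k
      nlinarith
    have h1 : tstar k = Real.exp (xbar k) := rfl
    rw [h1, ← hk, Real.exp_neg, Real.exp_log hApos]
  have htrace_id : c₁ * ∑ k, tstar k + c₂ * n = n * lstar := by
    have h := hlstar_eq
    simp only [hgdef] at h
    have hsum_eq : ∑ k, Real.exp (fixR lstar k) = ∑ k, tstar k := rfl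
    rw [hsum_eq] at h
    field_simp at h
    linarith
  set Gstar := Stmt13.Gm c₁ c₂ u tstar with hGstardef
  have hGpd : Gstar.PosDef := Stmt13.Gm_posDef hc₁ hc₂ u htstar0
  have htrG : Gstar.trace = n * lstar := by
    rw [hGstardef, Stmt13.Gm_trace c₁ c₂ u tstar hunit]
    exact htrace_id
  refine ⟨lstar⁻¹ • Gstar, Stmt13.posDef_smul' hGpd (by positivity), ?_, ?_⟩
  · -- Tmap fixed point
    have hSinv : (lstar⁻¹ • Gstar)⁻¹ = lstar • Gstar⁻¹ := by
      rw [Stmt13.smul_inv' hGpd (inv_ne_zero hlstar_pos.ne'), inv_inv]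
    have htv : (fun k => ((u k ⬝ᵥ ((lstar⁻¹ • Gstar)⁻¹ *ᵥ u k)) + eps)⁻¹) = tstar := by
      funext k
      rw [hSinv, Matrix.smul_mulVec, dotProduct_smul, smul_eq_mul]
      rw [hfix_eq k]
      simp only [Stmt13.qq, hGstardef]
    have hFt : Ftil n N eps ρ γ u (lstar⁻¹ • Gstar) = Gstar := by
      rw [hFtil (lstar⁻¹ • Gstar), htv, ← hGstardef]
    unfold Tmap
    rw [hFt, htrG, smul_smul]
    congr 1
    field_simp
  · rw [Matrix.trace_smul, htrG, smul_eq_mul]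
    field_simp
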